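/- For every simple pMC D over a finite parameter set X and every target set T: there exists a well-defined valuation val : X → [0,1] with Pr_{D[val]}(◇T) > 1/2 if and only if there exists a graph-preserving valuation val : X → (0,1) with Pr_{D[val]}(◇T) > 1/2. -/

import Mathlib

/-- A finite path in state space `S`: a length `m` together with `m + 1` states. -/
abbrev MCPath (S : Type) : Type := Σ m : ℕ, Fin (m + 1) → S

/-- The mass of a path: the product of the transition probabilities along it. -/
def pathMass {S : Type} (P : S → S → ℝ) (π : MCPath S) : ℝ :=
  ∏ i : Fin π.1, P (π.2 i.castSucc) (π.2 i.succ)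

/-- A hitting path from `s` to `T`: it starts in `s`, ends in `T`, and no proper prefix
visits `T`. -/
def IsHitting {S : Type} (T : Set S) (s : S) (π : MCPath S) : Prop :=
  π.2 0 = s ∧ π.2 (Fin.last π.1) ∈ T ∧ ∀ i : Fin π.1, π.2 i.castSucc ∉ T

/-- The reachability probability `Pr_{P,s}(◇T)`: the sum of the masses of all hitting
paths from `s` to `T`. -/
noncomputable def reachProb {S : Type} (P : S → S → ℝ) (T : Set S) (s : S) : ℝ :=
  ∑' π : {π : MCPath S // IsHitting T s π}, pathMass P π.1

/-- An entry of a simple pMC: a nonnegative rational constant, a variable `x`, or `1 - x`. -/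
def SimpleEntry {X : Type} (p : MvPolynomial X ℚ) : Prop :=
  (∃ q : ℚ, 0 ≤ q ∧ p = MvPolynomial.C q) ∨
  (∃ x : X, p = MvPolynomial.X x) ∨
  (∃ x : X, p = 1 - MvPolynomial.X x)

/-- A simple parametric Markov chain over parameter set `X` with `n` states:
all transition polynomials are simple entries and every row sums to `1` as a polynomial. -/
structure SimplePMC (X : Type) (n : ℕ) where
  init : Fin n
  P : Fin n → Fin n → MvPolynomial X ℚ
  simple : ∀ s s', SimpleEntry (P s s')
  rowSum : ∀ s, ∑ s', P s s' = 1

/-- A valuation is well-defined if every parameter value lies in `[0,1]`. -/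
def WDVal {X : Type} (val : X → ℝ) : Prop := ∀ x, val x ∈ Set.Icc (0 : ℝ) 1

/-- A valuation is graph-preserving if every parameter value lies in `(0,1)`. -/
def GPVal {X : Type} (val : X → ℝ) : Prop := ∀ x, val x ∈ Set.Ioo (0 : ℝ) 1

/-- The transition matrix of the instantiation `D[val]`. -/
noncomputable def instP {X : Type} {n : ℕ} (D : SimplePMC X n) (val : X → ℝ) :
    Fin n → Fin n → ℝ :=
  fun s s' => MvPolynomial.aeval val (D.P s s')

/- ## Auxiliary development -/

open scoped Classical

namespace Prop10Aux

variable {n : ℕ}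

/-- Weight of a length-`N` path. -/
def wN (P : Fin n → Fin n → ℝ) (N : ℕ) (h : Fin (N + 1) → Fin n) : ℝ :=
  ∏ i : Fin N, P (h i.castSucc) (h i.succ)

lemma wN_nonneg {P : Fin n → Fin n → ℝ} (hP : ∀ s s', 0 ≤ P s s') (N : ℕ)
    (h : Fin (N + 1) → Fin n) : 0 ≤ wN P N h :=
  Finset.prod_nonneg fun _ _ => hP _ _

lemma wN_snoc (P : Fin n → Fin n → ℝ) (N : ℕ) (g : Fin (N + 1) → Fin n) (a : Fin n) :
    wN P (N + 1) (Fin.snoc g a) = wN P N g * P (g (Fin.last N)) a := by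
  unfold wN
  rw [Fin.prod_univ_castSucc]
  congr 1
  · apply Finset.prod_congr rfl
    intro i _
    rw [Fin.succ_castSucc, Fin.snoc_castSucc, Fin.snoc_castSucc]
  · rw [Fin.snoc_castSucc, Fin.succ_last, Fin.snoc_last]

/-- One step of the peeling argument: summing the weight over the last coordinate. -/
lemma sum_snoc_step (P : Fin n → Fin n → ℝ) (hrow : ∀ s, ∑ s', P s s' = 1) (N : ℕ)
    (Q : (Fin (N + 1) → Fin n) → Prop) :
    (∑ h : Fin (N + 2) → Fin n,
      if Q (fun i => h i.castSucc) then wN P (N + 1) h else 0)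
      = ∑ g : Fin (N + 1) → Fin n, if Q g then wN P N g else 0 := by
  rw [← Equiv.sum_comp (Fin.snocEquiv (fun _ => Fin n))]
  rw [Fintype.sum_prod_type]
  rw [Finset.sum_comm]
  apply Finset.sum_congr rfl
  intro g _
  have happ : ∀ a : Fin n,
      (Fin.snocEquiv (fun _ => Fin n)) (a, g) = Fin.snoc g a := by
    intro a; funext i; simp [Fin.snocEquiv]
  simp only [happ, Fin.snoc_castSucc]
  by_cases hQ : Q g
  · simp only [hQ, if_true]
    calc ∑ a : Fin n, wN P (N + 1) (Fin.snoc g a)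
        = ∑ a : Fin n, wN P N g * P (g (Fin.last N)) a := by
          apply Finset.sum_congr rfl; intro a _; exact wN_snoc P N g a
      _ = wN P N g * ∑ a : Fin n, P (g (Fin.last N)) a := by rw [Finset.mul_sum]
      _ = wN P N g := by rw [hrow, mul_one]
  · simp only [hQ, if_false]
    simp

/-- Total weight of all length-`N` paths starting at `s` is `1`. -/
lemma sum_all_paths (P : Fin n → Fin n → ℝ) (hrow : ∀ s, ∑ s', P s s' = 1) :
    ∀ (N : ℕ) (s : Fin n),
      (∑ h : Fin (N + 1) → Fin n, if h 0 = s then wN P N h else 0) = 1 := by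
  intro N
  induction N with
  | zero =>
    intro s
    rw [Finset.sum_eq_single_of_mem (fun _ : Fin 1 => s) (Finset.mem_univ _)]
    · simp [wN]
    · intro h _ hne
      rw [if_neg]
      intro h0
      apply hne
      funext j
      have : j = 0 := Subsingleton.elim _ _
      rw [this, h0]
  | succ N ih =>
    intro s
    have key := sum_snoc_step P hrow N (fun g => g 0 = s)
    simp only [Fin.castSucc_zero] at key
    refine Eq.trans ?_ (key.trans (Eq.trans ?_ (ih s)))
    · exact Finset.sum_congr rfl fun g _ => by congr
    · exact Finset.sum_congr rfl fun g _ => by congr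

/-- `h` extends the path `p` of length `m` (meaningful when `m ≤ N`). -/
def Ext (m N : ℕ) (p : Fin (m + 1) → Fin n) (h : Fin (N + 1) → Fin n) : Prop :=
  ∀ j : Fin (m + 1), h ⟨j.1 % (N + 1), Nat.mod_lt _ (Nat.succ_pos N)⟩ = p j

lemma ext_apply {m N : ℕ} (hmN : m ≤ N) {p : Fin (m + 1) → Fin n}
    {h : Fin (N + 1) → Fin n} (he : Ext m N p h) (j : ℕ) (hj : j < m + 1) :
    h ⟨j, by omega⟩ = p ⟨j, hj⟩ := by
  have h1 : (⟨(⟨j, hj⟩ : Fin (m + 1)).1 % (N + 1), Nat.mod_lt _ (Nat.succ_pos N)⟩ : Fin (N + 1))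
      = ⟨j, by omega⟩ := by
    apply Fin.ext
    simp only []
    exact Nat.mod_eq_of_lt (show j < N + 1 by omega)
  have h2 := he ⟨j, hj⟩
  rw [h1] at h2
  exact h2

lemma ext_self {m : ℕ} (p : Fin (m + 1) → Fin n) : Ext m m p p := by
  intro j
  congr 1
  apply Fin.ext
  exact Nat.mod_eq_of_lt j.isLt

lemma ext_self_eq {m : ℕ} {p h : Fin (m + 1) → Fin n} (hext : Ext m m p h) : h = p := by
  funext j
  exact ext_apply (le_refl m) hext j.1 j.2

/-- The weights of all length-`N` extensions of a path `p` sum to the mass of `p`. -/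
lemma sum_extensions (P : Fin n → Fin n → ℝ) (hrow : ∀ s, ∑ s', P s s' = 1) (m : ℕ)
    (p : Fin (m + 1) → Fin n) :
    ∀ N, m ≤ N →
      (∑ h : Fin (N + 1) → Fin n, if Ext m N p h then wN P N h else 0) = wN P m p := by
  intro N
  induction N with
  | zero =>
    intro hm
    interval_cases m
    rw [Finset.sum_eq_single_of_mem p (Finset.mem_univ _)]
    · rw [if_pos (ext_self p)]
    · intro h _ hne
      rw [if_neg fun hext => hne (ext_self_eq hext)]
  | succ N ih =>
    intro hm
    rcases Nat.lt_or_ge N m with hlt | hge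
    · -- m = N + 1 : unique extension
      have hmeq : m = N + 1 := by omega
      subst hmeq
      rw [Finset.sum_eq_single_of_mem p (Finset.mem_univ _)]
      · rw [if_pos (ext_self p)]
      · intro h _ hne
        rw [if_neg fun hext => hne (ext_self_eq hext)]
    · -- m ≤ N : peel off the last step
      have key := sum_snoc_step P hrow N (fun g => Ext m N p g)
      calc (∑ h : Fin (N + 2) → Fin n, if Ext m (N + 1) p h then wN P (N + 1) h else 0)
          = ∑ h : Fin (N + 2) → Fin n,
              if Ext m N p (fun i : Fin (N + 1) => h i.castSucc) then wN P (N + 1) h else 0 := by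
            apply Finset.sum_congr rfl
            intro h _
            have hiff : Ext m (N + 1) p h ↔ Ext m N p (fun i : Fin (N + 1) => h i.castSucc) := by
              constructor
              · intro he j
                show h (Fin.castSucc ⟨j.1 % (N + 1), _⟩) = p j
                have h1 : j.1 % (N + 1) = j.1 := Nat.mod_eq_of_lt (by omega)
                have h2 : Fin.castSucc (⟨j.1 % (N + 1), Nat.mod_lt _ (Nat.succ_pos N)⟩ : Fin (N+1))
                    = (⟨j.1, by omega⟩ : Fin (N + 2)) := by
                  apply Fin.ext; simp [h1]
                rw [h2]
                exact ext_apply (by omega) he j.1 j.2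
              · intro he j
                have := he j
                have h1 : j.1 % (N + 1) = j.1 := Nat.mod_eq_of_lt (by omega)
                have h2 : j.1 % (N + 2) = j.1 := Nat.mod_eq_of_lt (by omega)
                have h3 : Fin.castSucc (⟨j.1 % (N + 1), Nat.mod_lt _ (Nat.succ_pos N)⟩ : Fin (N+1))
                    = (⟨j.1 % (N + 2), Nat.mod_lt _ (Nat.succ_pos (N+1))⟩ : Fin (N + 2)) := by
                  apply Fin.ext; simp [h1, h2]
                rw [← h3]
                exact this
            rw [if_congr hiff rfl rfl]
        _ = ∑ g : Fin (N + 1) → Fin n, if Ext m N p g then wN P N g else 0 := key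
        _ = wN P m p := ih hge

/-- Two hitting paths extended by a common long path are equal (ordered version). -/
lemma hitting_unique_aux {T : Set (Fin n)} {s : Fin n} {π π' : MCPath (Fin n)}
    (hπ : IsHitting T s π) (hπ' : IsHitting T s π') {N : ℕ} (hm : π.1 ≤ N) (hm' : π'.1 ≤ N)
    {h : Fin (N + 1) → Fin n} (e : Ext π.1 N π.2 h) (e' : Ext π'.1 N π'.2 h)
    (hle : π.1 ≤ π'.1) : π = π' := by
  obtain ⟨m, p⟩ := π
  obtain ⟨m', p'⟩ := π'
  simp only at hm hm' e e' hle hπ hπ' ⊢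
  have hagree : ∀ (j : ℕ) (hj : j < m + 1) (hj' : j < m' + 1), p ⟨j, hj⟩ = p' ⟨j, hj'⟩ := by
    intro j hj hj'
    have h1 := ext_apply hm e j hj
    have h2 := ext_apply hm' e' j hj'
    rw [← h1, ← h2]
  rcases eq_or_lt_of_le hle with heq | hlt
  · subst heq
    have : p = p' := by
      funext j
      have := hagree j.1 j.2 j.2
      simpa [Fin.eta] using this
    rw [this]
  · exfalso
    have hlast : p (Fin.last m) ∈ T := hπ.2.1
    have hnot : p' (Fin.castSucc ⟨m, hlt⟩) ∉ T := hπ'.2.2 ⟨m, hlt⟩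
    have : p (Fin.last m) = p' (Fin.castSucc ⟨m, hlt⟩) := by
      have := hagree m (Nat.lt_succ_self m) (by omega)
      convert this using 2 <;> exact Fin.ext rfl
    exact hnot (this ▸ hlast)

lemma hitting_unique {T : Set (Fin n)} {s : Fin n} {π π' : MCPath (Fin n)}
    (hπ : IsHitting T s π) (hπ' : IsHitting T s π') {N : ℕ} (hm : π.1 ≤ N) (hm' : π'.1 ≤ N)
    {h : Fin (N + 1) → Fin n} (e : Ext π.1 N π.2 h) (e' : Ext π'.1 N π'.2 h) : π = π' := by
  rcases le_total π.1 π'.1 with hle | hle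
  · exact hitting_unique_aux hπ hπ' hm hm' e e' hle
  · exact (hitting_unique_aux hπ' hπ hm' hm e' e hle).symm

/-- The masses of hitting paths are summable (Kraft-type bound). -/
lemma hitting_summable (P : Fin n → Fin n → ℝ) (hP : ∀ s s', 0 ≤ P s s')
    (hrow : ∀ s, ∑ s', P s s' = 1) (T : Set (Fin n)) (s : Fin n) :
    Summable (fun π : {π : MCPath (Fin n) // IsHitting T s π} => pathMass P π.1) := by
  apply summable_of_sum_le (c := 1)
  · intro π
    exact Finset.prod_nonneg fun _ _ => hP _ _
  · intro u
    set N : ℕ := u.sup (fun π => π.1.1) with hN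
    have hbd : ∀ π ∈ u, π.1.1 ≤ N := fun π hπ => Finset.le_sup (f := fun π => π.1.1) hπ
    have hmass : ∀ π ∈ u,
        pathMass P π.1 = ∑ h : Fin (N + 1) → Fin n,
          if Ext π.1.1 N π.1.2 h then wN P N h else 0 := by
      intro π hπ
      rw [sum_extensions P hrow π.1.1 π.1.2 N (hbd π hπ)]
      rfl
    calc ∑ π ∈ u, pathMass P π.1
        = ∑ π ∈ u, ∑ h : Fin (N + 1) → Fin n,
            if Ext π.1.1 N π.1.2 h then wN P N h else 0 :=
          Finset.sum_congr rfl hmass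
      _ = ∑ h : Fin (N + 1) → Fin n, ∑ π ∈ u,
            if Ext π.1.1 N π.1.2 h then wN P N h else 0 := Finset.sum_comm
      _ ≤ ∑ h : Fin (N + 1) → Fin n, (if h 0 = s then wN P N h else 0) := by
          apply Finset.sum_le_sum
          intro h _
          by_cases hc : ∃ π ∈ u, Ext π.1.1 N π.1.2 h
          · obtain ⟨π0, hπ0u, hπ0⟩ := hc
            rw [Finset.sum_eq_single_of_mem π0 hπ0u]
            · rw [if_pos hπ0]
              have hstart : h 0 = s := by
                have := ext_apply (hbd π0 hπ0u) hπ0 0 (Nat.succ_pos _)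
                have h0 : (⟨0, by omega⟩ : Fin (N + 1)) = 0 := rfl
                have h0' : (⟨0, Nat.succ_pos _⟩ : Fin (π0.1.1 + 1)) = 0 := rfl
                rw [h0, h0'] at this
                rw [this]
                exact π0.2.1
              rw [if_pos hstart]
            · intro π hπu hne
              rw [if_neg]
              intro hext
              exact hne (Subtype.ext
                (hitting_unique π.2 π0.2 (hbd π hπu) (hbd π0 hπ0u) hext hπ0))
          · push_neg at hc
            rw [Finset.sum_eq_zero]
            · split
              · exact wN_nonneg hP N h
              · exact le_refl 0
            · intro π hπu
              rw [if_neg (hc π hπu)]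
      _ = 1 := sum_all_paths P hrow N s

end Prop10Aux

open Prop10Aux in
/-- Proposition 10 of the paper: for a simple pMC, some well-defined valuation achieves
reachability probability `> 1/2` iff some graph-preserving valuation does. -/
theorem exists_wd_gt_half_iff_exists_gp_gt_half {X : Type} [Fintype X] {n : ℕ}
    (D : SimplePMC X n) (T : Set (Fin n)) :
    (∃ val : X → ℝ, WDVal val ∧ reachProb (instP D val) T D.init > 1 / 2) ↔
    (∃ val : X → ℝ, GPVal val ∧ reachProb (instP D val) T D.init > 1 / 2) := by
  have instP_nonneg : ∀ (val : X → ℝ), WDVal val → ∀ s s', 0 ≤ instP D val s s' := by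
    intro val hv s s'
    rcases D.simple s s' with ⟨q, hq, hps⟩ | ⟨x, hps⟩ | ⟨x, hps⟩
    · simp only [instP, hps, map_ratCast, MvPolynomial.aeval_C]
      have : ((q : ℝ)) = algebraMap ℚ ℝ q := rfl
      positivity
    · simp only [instP, hps, MvPolynomial.aeval_X]
      exact (hv x).1
    · simp only [instP, hps, map_sub, map_one, MvPolynomial.aeval_X]
      have := (hv x).2
      linarith
  have instP_rowSum : ∀ (val : X → ℝ) (s : Fin n), ∑ s', instP D val s s' = 1 := by
    intro val s
    have : ∑ s', instP D val s s' = MvPolynomial.aeval val (∑ s', D.P s s') := by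
      rw [map_sum]
      rfl
    rw [this, D.rowSum, map_one]
  constructor
  · rintro ⟨val, hwd, hgt⟩
    -- the perturbed valuation
    set valT : ℝ → X → ℝ := fun t x => (1 - t) * val x + t / 2 with hvalT
    have hval0 : valT 0 = val := by funext x; simp [hvalT]
    have hGP : ∀ t ∈ Set.Ioo (0 : ℝ) 1, GPVal (valT t) := by
      intro t ht x
      have h1 := (hwd x).1
      have h2 := (hwd x).2
      constructor
      · have : 0 ≤ (1 - t) * val x := mul_nonneg (by linarith [ht.2]) h1
        simp only [hvalT]
        linarith [ht.1]
      · have : (1 - t) * val x ≤ 1 - t :=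
          mul_le_of_le_one_right (by linarith [ht.2]) h2 |>.trans (by nlinarith [ht.2])
        simp only [hvalT]
        nlinarith [ht.1, ht.2, mul_le_of_le_one_right (show (0:ℝ) ≤ 1 - t by linarith [ht.2]) h2]
    have hWDt : ∀ t ∈ Set.Ioo (0 : ℝ) 1, WDVal (valT t) := by
      intro t ht x
      exact ⟨le_of_lt (hGP t ht x).1, le_of_lt (hGP t ht x).2⟩
    -- summability at the original valuation; extract a finite subsum > 1/2
    have hsum : Summable
        (fun π : {π : MCPath (Fin n) // IsHitting T D.init π} => pathMass (instP D val) π.1) :=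
      hitting_summable _ (instP_nonneg val hwd) (instP_rowSum val) T D.init
    have hev : ∀ᶠ u in
        (Filter.atTop : Filter (Finset {π : MCPath (Fin n) // IsHitting T D.init π})),
        1 / 2 < ∑ π ∈ u, pathMass (instP D val) π.1 :=
      hsum.hasSum.eventually (eventually_gt_nhds hgt)
    obtain ⟨u, hu⟩ := hev.exists
    -- continuity in t of the finite sum
    have hcont : Continuous (fun t : ℝ => ∑ π ∈ u, pathMass (instP D (valT t)) π.1) := by
      apply continuous_finset_sum
      intro π _
      simp only [pathMass]
      apply continuous_finset_prod
      intro i _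
      have : ∀ s s', Continuous (fun t : ℝ => instP D (valT t) s s') := by
        intro s s'
        rcases D.simple s s' with ⟨q, _, hps⟩ | ⟨x, hps⟩ | ⟨x, hps⟩
        · simp only [instP, hps, MvPolynomial.aeval_C]
          exact continuous_const
        · simp only [instP, hps, MvPolynomial.aeval_X, hvalT]
          continuity
        · simp only [instP, hps, map_sub, map_one, MvPolynomial.aeval_X, hvalT]
          continuity
      exact this _ _
    -- find a small positive t keeping the finite sum above 1/2
    have h0 : (1 : ℝ) / 2 < ∑ π ∈ u, pathMass (instP D (valT 0)) π.1 := by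
      rw [hval0]; exact hu
    have hnb : ∃ ε > 0, ∀ t : ℝ, |t| < ε →
        1 / 2 < ∑ π ∈ u, pathMass (instP D (valT t)) π.1 := by
      have hmem : (fun t : ℝ => ∑ π ∈ u, pathMass (instP D (valT t)) π.1) ⁻¹'
          (Set.Ioi (1 / 2)) ∈ nhds (0 : ℝ) :=
        hcont.continuousAt.preimage_mem_nhds (Ioi_mem_nhds h0)
      rw [Metric.mem_nhds_iff] at hmem
      obtain ⟨ε, hε, hball⟩ := hmem
      exact ⟨ε, hε, fun t ht => hball (by simpa [Real.dist_eq] using ht)⟩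
    obtain ⟨ε, hε, hεlt⟩ := hnb
    set t : ℝ := min (ε / 2) (1 / 2) with htdef
    have ht01 : t ∈ Set.Ioo (0 : ℝ) 1 := by
      constructor
      · apply lt_min <;> linarith
      · calc t ≤ 1 / 2 := min_le_right _ _
          _ < 1 := by norm_num
    have htε : |t| < ε := by
      rw [abs_of_pos ht01.1]
      calc t ≤ ε / 2 := min_le_left _ _
        _ < ε := by linarith
    refine ⟨valT t, hGP t ht01, ?_⟩
    have hsum' : Summable (fun π : {π : MCPath (Fin n) // IsHitting T D.init π} =>
        pathMass (instP D (valT t)) π.1) :=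
      hitting_summable _ (instP_nonneg _ (hWDt t ht01)) (instP_rowSum _) T D.init
    have hle : ∑ π ∈ u, pathMass (instP D (valT t)) π.1 ≤
        reachProb (instP D (valT t)) T D.init := by
      apply Summable.sum_le_tsum u _ hsum'
      intro π _
      exact Finset.prod_nonneg fun _ _ => instP_nonneg _ (hWDt t ht01) _ _
    exact lt_of_lt_of_le (hεlt t htε) hle
  · rintro ⟨val, hgp, hgt⟩
    exact ⟨val, fun x => ⟨le_of_lt (hgp x).1, le_of_lt (hgp x).2⟩, hgt⟩
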